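/- Directional derivative of the soft-optimal value in the reward (Lemma first_der): Let β > 0 and let r, h be bounded measurable rewards. For ε ∈ ℝ set r^ε := r + εh and π^ε := π*_{r^ε}. Then for every t, s, a, the maps ε ↦ V*_{t,r^ε}(s), ε ↦ Q*_{t,r^ε}(s,a), and ε ↦ J*(r^ε) are differentiable, with derivatives d/dε V*_{t,r^ε}(s) = V^{π^ε,0}_{t,h}(s), d/dε Q*_{t,r^ε}(s,a) = Q^{π^ε,0}_{t,h}(s,a), and d/dε J*(r^ε) = J⁰(h, π^ε) = Σ_{t=1}^T E^{π^ε}[ h_t(s_t,a_t) ], where V^{π,0}_{t,h}, Q^{π,0}_{t,h}, J⁰(h,π) denote the unregularized (β = 0) value, Q-function, and expected return of the policy π for the reward h, and E^{π^ε} is expectation under the trajectory law P^{π^ε}. -/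

import Mathlib

open MeasureTheory ProbabilityTheory Real
open scoped ENNReal RealInnerProductSpace

noncomputable section

namespace IRL

variable {S A : Type*} [MeasurableSpace S] [MeasurableSpace A]

/-- A reward tuple `(r_t)` of bounded measurable functions. -/
def IsBddReward (r : ℕ → S → A → ℝ) : Prop :=
  ∀ t, Measurable (fun q : S × A => r t q.1 q.2) ∧ ∃ C, ∀ s a, |r t s a| ≤ C

/-- `p` is a family of `ν`-probability densities of a Markov policy. -/
def IsPolicyDensity (ν : Measure A) (p : ℕ → S → A → ℝ) : Prop :=
  (∀ t, Measurable (fun q : S × A => p t q.1 q.2)) ∧ (∀ t s a, 0 ≤ p t s a) ∧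
    (∀ t s, ∫ a, p t s a ∂ν = 1)

/-- the log-densities `log π_t` are bounded (in particular the densities are positive). -/
def HasBddLogDensity (p : ℕ → S → A → ℝ) : Prop :=
  ∀ t, (∀ s a, 0 < p t s a) ∧ ∃ C, ∀ s a, |Real.log (p t s a)| ≤ C

variable (T : ℕ) (P : ℕ → Kernel (S × A) S) (ν : Measure A)

/-- Soft-optimal value function `V*_{t,r}` (backward recursion, `V* t ≡ 0` for `t > T`). -/
def Vstar (β : ℝ) (r : ℕ → S → A → ℝ) (t : ℕ) (s : S) : ℝ :=
  if T < t then 0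
  else β * Real.log (∫ a, Real.exp ((r t s a + ∫ s', Vstar β r (t + 1) s' ∂(P t (s, a))) / β) ∂ν)
termination_by T + 1 - t
decreasing_by omega

/-- Soft-optimal state-action value `Q*_{t,r}`. -/
def Qstar (β : ℝ) (r : ℕ → S → A → ℝ) (t : ℕ) (s : S) (a : A) : ℝ :=
  r t s a + ∫ s', Vstar T P ν β r (t + 1) s' ∂(P t (s, a))

/-- `ν`-density of the soft-optimal policy `π*_r`. -/
def piStar (β : ℝ) (r : ℕ → S → A → ℝ) (t : ℕ) (s : S) (a : A) : ℝ :=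
  Real.exp ((Qstar T P ν β r t s a - Vstar T P ν β r t s) / β)

/-- Value function `V^π_{t,r}` of a policy given by densities `p` (with `β = 0` this is the
unregularized value function `V^{π,0}`). -/
def Vpol (β : ℝ) (p r : ℕ → S → A → ℝ) (t : ℕ) (s : S) : ℝ :=
  if T < t then 0
  else ∫ a,
    (r t s a + (∫ s', Vpol β p r (t + 1) s' ∂(P t (s, a))) - β * Real.log (p t s a)) * p t s a ∂ν
termination_by T + 1 - t
decreasing_by omega

/-- `Q^π_{t,r}` for a policy given by densities `p`. -/
def Qpol (β : ℝ) (p r : ℕ → S → A → ℝ) (t : ℕ) (s : S) (a : A) : ℝ :=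
  r t s a + ∫ s', Vpol T P ν β p r (t + 1) s' ∂(P t (s, a))

/-- Regularized advantage `A^π_{t,r}(s,a) = Q^π - V^π - β log π_t(a|s)`. -/
def Apol (β : ℝ) (p r : ℕ → S → A → ℝ) (t : ℕ) (s : S) (a : A) : ℝ :=
  Qpol T P ν β p r t s a - Vpol T P ν β p r t s - β * Real.log (p t s a)

variable (P0 : Measure S)

/-- Optimal value `J*(r) = ∫ V*_{1,r} dP₀`. -/
def Jstar (β : ℝ) (r : ℕ → S → A → ℝ) : ℝ := ∫ s, Vstar T P ν β r 1 s ∂P0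

/-- Expected (regularized) return `J(r,π)` of a density policy. -/
def Jpol (β : ℝ) (p r : ℕ → S → A → ℝ) : ℝ := ∫ s, Vpol T P ν β p r 1 s ∂P0

/-- Iterated expectation, from time `t` in state `s`, of a trajectory functional `g` under a
(kernel) Markov policy `π`; coordinates of the trajectory outside `{1,…,T}` are irrelevant
junk values. -/
def polExp [Nonempty S] [Nonempty A] (pol : ℕ → Kernel S A) (g : (ℕ → S × A) → ℝ) (t : ℕ)
    (s : S) : ℝ :=
  if T < t then g (fun _ => (Classical.arbitrary S, Classical.arbitrary A))
  else ∫ a, ∫ s', polExp pol (fun τ => g (Function.update τ t (s, a))) (t + 1) s' ∂(P t (s, a))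
    ∂(pol t s)
termination_by T + 1 - t
decreasing_by omega

/-- `μ` is the trajectory law `P^π` of the Markov policy `π` (with initial distribution `P₀`),
characterized through integrals of all bounded measurable trajectory functionals. -/
def IsTrajLaw [Nonempty S] [Nonempty A] (pol : ℕ → Kernel S A) (μ : Measure (ℕ → S × A)) : Prop :=
  IsProbabilityMeasure μ ∧
    ∀ g : (ℕ → S × A) → ℝ, Measurable g → (∃ C, ∀ τ, |g τ| ≤ C) →
      ∫ τ, g τ ∂μ = ∫ s, polExp T P pol g 1 s ∂P0

/-- The kernel `s ↦ p t s ⬝ ν` of a policy given by densities. -/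
def densKernel [IsFiniteMeasure ν] (p : ℕ → S → A → ℝ) (t : ℕ) : Kernel S A :=
  Kernel.withDensity (Kernel.const S ν) fun s a => ENNReal.ofReal (p t s a)

open Classical in
/-- Kullback–Leibler divergence `∫ log (dμ/dμ') dμ` if `μ ≪ μ'` (`∞` otherwise). -/
def KL {X : Type*} [MeasurableSpace X] (μ μ' : Measure X) : ℝ≥0∞ :=
  if μ ≪ μ' ∧ Integrable (fun x => Real.log (μ.rnDeriv μ' x).toReal) μ then
    ENNReal.ofReal (∫ x, Real.log (μ.rnDeriv μ' x).toReal ∂μ)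
  else ⊤

/-- Squared Hellinger distance, computed with the dominating measure `μ + μ'`. -/
def sqHellinger {X : Type*} [MeasurableSpace X] (μ μ' : Measure X) : ℝ :=
  ∫ x, (Real.sqrt ((μ.rnDeriv (μ + μ') x).toReal)
      - Real.sqrt ((μ'.rnDeriv (μ + μ') x).toReal)) ^ 2 ∂(μ + μ')

/-- Second directional derivative. -/
def D2 {E : Type*} [NormedAddCommGroup E] [NormedSpace ℝ E] (F : E → ℝ) (θ ξ ζ : E) : ℝ :=
  fderiv ℝ (fun x => fderiv ℝ F x ζ) θ ξ

/-- Third directional derivative. -/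
def D3 {E : Type*} [NormedAddCommGroup E] [NormedSpace ℝ E] (F : E → ℝ) (θ ξ ζ ω : E) : ℝ :=
  fderiv ℝ (fun x => D2 F x ζ ω) θ ξ

end IRL

section AuxProof
open MeasureTheory ProbabilityTheory Real Filter
open scoped ENNReal

namespace IRLAux

variable {S A : Type*} [MeasurableSpace S] [MeasurableSpace A] [Nonempty S] [Nonempty A]
variable (T : ℕ) (P : ℕ → Kernel (S × A) S) [∀ t, IsMarkovKernel (P t)]
variable (ν : Measure A) [IsFiniteMeasure ν]

lemma integrable_of_bdd {X : Type*} [MeasurableSpace X] {μ : Measure X} [IsFiniteMeasure μ]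
    {f : X → ℝ} {C : ℝ} (hm : AEStronglyMeasurable f μ) (hb : ∀ x, |f x| ≤ C) :
    Integrable f μ :=
  ⟨hm, HasFiniteIntegral.of_bounded (C := C) (Filter.Eventually.of_forall hb)⟩

lemma abs_integral_le_prob {X : Type*} [MeasurableSpace X] (μ : Measure X)
    [IsProbabilityMeasure μ] {f : X → ℝ} {B : ℝ} (hb : ∀ x, |f x| ≤ B) :
    |∫ x, f x ∂μ| ≤ B := by
  have := norm_integral_le_of_norm_le_const (μ := μ) (f := f) (C := B)
    (Eventually.of_forall fun x => by simpa [Real.norm_eq_abs] using hb x)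
  simpa [Real.norm_eq_abs, measure_univ] using this

lemma meas_kernel_integral {t : ℕ} {f : S → ℝ} (hf : Measurable f) :
    Measurable fun q : S × A => ∫ s', f s' ∂(P t q) := by
  have h : StronglyMeasurable fun p : (S × A) × S => f p.2 :=
    (hf.comp measurable_snd).stronglyMeasurable
  exact h.integral_kernel_prod_right'.measurable

lemma meas_integral_nu {F : S × A → ℝ} (hF : Measurable F) :
    Measurable fun s => ∫ a, F (s, a) ∂ν :=
  hF.stronglyMeasurable.integral_prod_right'.measurable

lemma integral_exp_bdd (hν : ν Set.univ ≠ 0) {f : A → ℝ} (hm : Measurable f) {M : ℝ}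
    (hM : ∀ a, |f a| ≤ M) :
    ((ν Set.univ).toReal * Real.exp (-M) ≤ ∫ a, Real.exp (f a) ∂ν ∧
      ∫ a, Real.exp (f a) ∂ν ≤ (ν Set.univ).toReal * Real.exp M) ∧
      0 < ∫ a, Real.exp (f a) ∂ν := by
  have hpos : 0 < (ν Set.univ).toReal :=
    ENNReal.toReal_pos hν (measure_ne_top ν _)
  have hint : Integrable (fun a => Real.exp (f a)) ν := by
    refine integrable_of_bdd ((Real.measurable_exp.comp hm).aestronglyMeasurable) (C := Real.exp M)
      fun a => ?_
    rw [abs_of_pos (Real.exp_pos _)]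
    exact Real.exp_le_exp.2 ((abs_le.1 (hM a)).2)
  have hlow : (ν Set.univ).toReal * Real.exp (-M) ≤ ∫ a, Real.exp (f a) ∂ν := by
    have := integral_mono (integrable_const (Real.exp (-M))) hint
      (fun a => Real.exp_le_exp.2 ((abs_le.1 (hM a)).1))
    simpa [smul_eq_mul, Measure.real] using this
  have hhigh : ∫ a, Real.exp (f a) ∂ν ≤ (ν Set.univ).toReal * Real.exp M := by
    have := integral_mono hint (integrable_const (Real.exp M))
      (fun a => Real.exp_le_exp.2 ((abs_le.1 (hM a)).2))
    simpa [smul_eq_mul, Measure.real] using this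
  exact ⟨⟨hlow, hhigh⟩, lt_of_lt_of_le (by positivity) hlow⟩

/-- Measurability and boundedness of `Vstar`. -/
lemma vstar_meas_bdd (β : ℝ) (hβ : 0 < β) (hν : ν Set.univ ≠ 0) (r : ℕ → S → A → ℝ)
    (hrm : ∀ u, Measurable fun q : S × A => r u q.1 q.2) (C : ℝ)
    (hC : ∀ u, u ≤ T → ∀ s a, |r u s a| ≤ C) :
    ∀ t, Measurable (IRL.Vstar T P ν β r t) ∧
      ∀ s, |IRL.Vstar T P ν β r t s| ≤
        (T + 1 - t : ℕ) * (C + β * |Real.log (ν Set.univ).toReal|) := by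
  have hC0 : 0 ≤ C := le_trans (abs_nonneg _)
    (hC 0 (Nat.zero_le _) (Classical.arbitrary S) (Classical.arbitrary A))
  set K : ℝ := C + β * |Real.log (ν Set.univ).toReal| with hK
  have hK0 : 0 ≤ K := by positivity
  have H : ∀ d t, T + 1 ≤ t + d →
      Measurable (IRL.Vstar T P ν β r t) ∧
      ∀ s, |IRL.Vstar T P ν β r t s| ≤ (T + 1 - t : ℕ) * K := by
    intro d
    induction d with
    | zero =>
      intro t ht
      have htT : T < t := by omega
      have h0 : IRL.Vstar T P ν β r t = fun _ => 0 :=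
        funext fun s => by rw [IRL.Vstar, if_pos htT]
      refine ⟨by rw [h0]; exact measurable_const, fun s => by rw [h0]; simp; positivity⟩
    | succ d ih =>
      intro t ht
      by_cases htT : T < t
      · have h0 : IRL.Vstar T P ν β r t = fun _ => 0 :=
          funext fun s => by rw [IRL.Vstar, if_pos htT]
        refine ⟨by rw [h0]; exact measurable_const, fun s => by rw [h0]; simp; positivity⟩
      · push_neg at htT
        obtain ⟨ihm, ihb⟩ := ih (t + 1) (by omega)
        -- the W function
        set W : S × A → ℝ := fun q => ∫ s', IRL.Vstar T P ν β r (t + 1) s' ∂(P t q) with hWdef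
        have hWm : Measurable W := meas_kernel_integral P ihm
        have ihb' : ∀ s', |IRL.Vstar T P ν β r (t + 1) s'| ≤ (T - t : ℕ) * K := by
          intro s'
          have := ihb s'
          rwa [show T + 1 - (t + 1) = T - t from by omega] at this
        have hWb : ∀ q, |W q| ≤ (T - t : ℕ) * K := fun q =>
          abs_integral_le_prob _ fun s' => ihb' s'
        set Q : S × A → ℝ := fun q => r t q.1 q.2 + W q with hQdef
        have hQm : Measurable Q := (hrm t).add hWm
        have hQb : ∀ q, |Q q| ≤ C + (T - t : ℕ) * K := fun q =>
          le_trans (abs_add_le _ _) (add_le_add (hC t htT q.1 q.2) (hWb q))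
        set M : ℝ := C + (T - t : ℕ) * K with hM
        have hM0 : 0 ≤ M := by positivity
        set I : S → ℝ := fun s => ∫ a, Real.exp (Q (s, a) / β) ∂ν with hI
        have hQm' : ∀ s : S, Measurable fun a => Q (s, a) / β :=
          fun s => (hQm.comp measurable_prodMk_left).div_const β
        have hQb' : ∀ s a, |Q (s, a) / β| ≤ M / β := by
          intro s a
          rw [abs_div, abs_of_pos hβ]
          gcongr
          exact hQb _
        have hIbd : ∀ s : S,
            ((ν Set.univ).toReal * Real.exp (-(M / β)) ≤ I s ∧
              I s ≤ (ν Set.univ).toReal * Real.exp (M / β)) ∧ 0 < I s :=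
          fun s => integral_exp_bdd ν hν (hQm' s) (fun a => hQb' s a)
        have hunfold : ∀ s, IRL.Vstar T P ν β r t s = β * Real.log (I s) := by
          intro s
          rw [IRL.Vstar, if_neg (not_lt.2 htT)]
        constructor
        · have hmI : Measurable I := by
            rw [hI]
            exact meas_integral_nu ν (Real.measurable_exp.comp ((hQm).div_const β))
          have hfun : IRL.Vstar T P ν β r t = fun s => β * Real.log (I s) := funext hunfold
          rw [hfun]
          exact (Real.measurable_log.comp hmI).const_mul β
        · intro s
          rw [hunfold s]
          have hνA : 0 < (ν Set.univ).toReal := ENNReal.toReal_pos hν (measure_ne_top ν _)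
          have h1 : Real.log (I s) ≤ Real.log (ν Set.univ).toReal + M / β := by
            have := Real.log_le_log (hIbd s).2 (hIbd s).1.2
            rwa [Real.log_mul hνA.ne' (Real.exp_pos _).ne', Real.log_exp] at this
          have h2 : Real.log (ν Set.univ).toReal - M / β ≤ Real.log (I s) := by
            have := Real.log_le_log (by positivity) (hIbd s).1.1
            rwa [Real.log_mul hνA.ne' (Real.exp_pos _).ne', Real.log_exp, ← sub_eq_add_neg]
              at this
          have habs : |Real.log (I s)| ≤ |Real.log (ν Set.univ).toReal| + M / β := by
            rw [abs_le]
            constructor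
            · have := neg_abs_le (Real.log (ν Set.univ).toReal); linarith
            · have := le_abs_self (Real.log (ν Set.univ).toReal); linarith
          have hTt : ((T + 1 - t : ℕ) : ℝ) = ((T - t : ℕ) : ℝ) + 1 := by
            have : (T + 1 - t : ℕ) = (T - t) + 1 := by omega
            rw [this]; push_cast; ring
          rw [abs_mul, abs_of_pos hβ]
          calc β * |Real.log (I s)| ≤ β * (|Real.log (ν Set.univ).toReal| + M / β) := by
                exact mul_le_mul_of_nonneg_left habs (le_of_lt hβ)
            _ = β * |Real.log (ν Set.univ).toReal| + M := by field_simp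
            _ ≤ (T + 1 - t : ℕ) * K := by
                rw [hTt]
                exact le_of_eq (by rw [hM, hK]; ring)
  exact fun t => H (T + 1) t (by omega)

lemma qstar_meas_bdd (β : ℝ) (hβ : 0 < β) (hν : ν Set.univ ≠ 0) (r : ℕ → S → A → ℝ)
    (hrm : ∀ u, Measurable fun q : S × A => r u q.1 q.2) (C : ℝ)
    (hC : ∀ u, u ≤ T → ∀ s a, |r u s a| ≤ C) (t : ℕ) :
    Measurable (fun q : S × A => IRL.Qstar T P ν β r t q.1 q.2) ∧
      (t ≤ T → ∀ s a, |IRL.Qstar T P ν β r t s a| ≤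
        C + (T - t : ℕ) * (C + β * |Real.log (ν Set.univ).toReal|)) := by
  obtain ⟨hm, hb⟩ := vstar_meas_bdd T P ν β hβ hν r hrm C hC (t + 1)
  constructor
  · exact (hrm t).add (meas_kernel_integral P hm)
  · intro htT s a
    have hb' : ∀ s', |IRL.Vstar T P ν β r (t + 1) s'| ≤
        (T - t : ℕ) * (C + β * |Real.log (ν Set.univ).toReal|) := by
      intro s'
      have := hb s'
      rwa [show T + 1 - (t + 1) = T - t from by omega] at this
    exact le_trans (abs_add_le _ _)
      (add_le_add (hC t htT s a) (abs_integral_le_prob _ hb'))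

lemma piStar_props (β : ℝ) (hβ : 0 < β) (hν : ν Set.univ ≠ 0) (r : ℕ → S → A → ℝ)
    (hrm : ∀ u, Measurable fun q : S × A => r u q.1 q.2) (C : ℝ)
    (hC : ∀ u, u ≤ T → ∀ s a, |r u s a| ≤ C) :
    (∀ u, Measurable fun q : S × A => IRL.piStar T P ν β r u q.1 q.2) ∧
    (∀ u s a, 0 ≤ IRL.piStar T P ν β r u s a) ∧
    (∀ u, u ≤ T → ∃ D, ∀ s a, |IRL.piStar T P ν β r u s a| ≤ D) ∧
    (∀ u s, u ≤ T → ∫ a, IRL.piStar T P ν β r u s a ∂ν = 1) := by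
  set K : ℝ := C + β * |Real.log (ν Set.univ).toReal| with hK
  refine ⟨?_, ?_, ?_, ?_⟩
  · intro u
    have hq := (qstar_meas_bdd T P ν β hβ hν r hrm C hC u).1
    have hv := (vstar_meas_bdd T P ν β hβ hν r hrm C hC u).1
    exact Real.measurable_exp.comp ((hq.sub (hv.comp measurable_fst)).div_const β)
  · exact fun u s a => (Real.exp_pos _).le
  · intro u hu
    have hqb := (qstar_meas_bdd T P ν β hβ hν r hrm C hC u).2 hu
    have hvb := (vstar_meas_bdd T P ν β hβ hν r hrm C hC u).2
    refine ⟨Real.exp ((C + (T - u : ℕ) * K + (T + 1 - u : ℕ) * K) / β), fun s a => ?_⟩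
    rw [IRL.piStar, abs_of_pos (Real.exp_pos _)]
    apply Real.exp_le_exp.2
    gcongr
    calc IRL.Qstar T P ν β r u s a - IRL.Vstar T P ν β r u s
        ≤ |IRL.Qstar T P ν β r u s a| + |IRL.Vstar T P ν β r u s| :=
          le_trans (le_abs_self _) (abs_sub _ _)
      _ ≤ C + (T - u : ℕ) * K + (T + 1 - u : ℕ) * K := add_le_add (hqb s a) (hvb s)
  · intro u s hu
    have hqm := (qstar_meas_bdd T P ν β hβ hν r hrm C hC u).1
    have hqb := (qstar_meas_bdd T P ν β hβ hν r hrm C hC u).2 hu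
    set I : ℝ := ∫ a, Real.exp (IRL.Qstar T P ν β r u s a / β) ∂ν with hI
    have hIpos : 0 < I :=
      (integral_exp_bdd ν hν ((hqm.comp measurable_prodMk_left).div_const β)
        (M := (C + (T - u : ℕ) * K) / β)
        (fun a => by rw [abs_div, abs_of_pos hβ]; gcongr; exact hqb s a)).2
    have hV : IRL.Vstar T P ν β r u s = β * Real.log I := by
      rw [IRL.Vstar, if_neg (not_lt.2 hu)]
      rfl
    have hpoint : ∀ a, IRL.piStar T P ν β r u s a
        = Real.exp (IRL.Qstar T P ν β r u s a / β) * I⁻¹ := by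
      intro a
      rw [IRL.piStar, hV,
        show (IRL.Qstar T P ν β r u s a - β * Real.log I) / β
          = IRL.Qstar T P ν β r u s a / β - Real.log I from by field_simp,
        Real.exp_sub, Real.exp_log hIpos, div_eq_mul_inv]
    calc ∫ a, IRL.piStar T P ν β r u s a ∂ν
        = ∫ a, Real.exp (IRL.Qstar T P ν β r u s a / β) * I⁻¹ ∂ν := by simp_rw [hpoint]
      _ = I * I⁻¹ := by rw [integral_mul_const]
      _ = 1 := mul_inv_cancel₀ hIpos.ne'

lemma vpol_meas_bdd (p h : ℕ → S → A → ℝ)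
    (hpm : ∀ u, Measurable fun q : S × A => p u q.1 q.2)
    (hp0 : ∀ u s a, 0 ≤ p u s a)
    (hpD : ∀ u, u ≤ T → ∃ D, ∀ s a, |p u s a| ≤ D)
    (hp1 : ∀ u s, u ≤ T → ∫ a, p u s a ∂ν = 1)
    (hhm : ∀ u, Measurable fun q : S × A => h u q.1 q.2) (Ch : ℝ)
    (hCh : ∀ u, u ≤ T → ∀ s a, |h u s a| ≤ Ch) :
    ∀ t, Measurable (IRL.Vpol T P ν 0 p h t) ∧
      ∀ s, |IRL.Vpol T P ν 0 p h t s| ≤ (T + 1 - t : ℕ) * Ch := by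
  have hCh0 : 0 ≤ Ch := le_trans (abs_nonneg _)
    (hCh 0 (Nat.zero_le _) (Classical.arbitrary S) (Classical.arbitrary A))
  have H : ∀ d t, T + 1 ≤ t + d →
      Measurable (IRL.Vpol T P ν 0 p h t) ∧
      ∀ s, |IRL.Vpol T P ν 0 p h t s| ≤ (T + 1 - t : ℕ) * Ch := by
    intro d
    induction d with
    | zero =>
      intro t ht
      have htT : T < t := by omega
      have h0 : IRL.Vpol T P ν 0 p h t = fun _ => 0 :=
        funext fun s => by rw [IRL.Vpol, if_pos htT]
      refine ⟨by rw [h0]; exact measurable_const, fun s => by rw [h0]; simp; positivity⟩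
    | succ d ih =>
      intro t ht
      by_cases htT : T < t
      · have h0 : IRL.Vpol T P ν 0 p h t = fun _ => 0 :=
          funext fun s => by rw [IRL.Vpol, if_pos htT]
        refine ⟨by rw [h0]; exact measurable_const, fun s => by rw [h0]; simp; positivity⟩
      · push_neg at htT
        obtain ⟨ihm, ihb⟩ := ih (t + 1) (by omega)
        obtain ⟨D, hD⟩ := hpD t htT
        have hD0 : 0 ≤ D := le_trans (abs_nonneg _)
          (hD (Classical.arbitrary S) (Classical.arbitrary A))
        have ihb' : ∀ s', |IRL.Vpol T P ν 0 p h (t + 1) s'| ≤ (T - t : ℕ) * Ch := by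
          intro s'
          have := ihb s'
          rwa [show T + 1 - (t + 1) = T - t from by omega] at this
        set W : S × A → ℝ := fun q => ∫ s', IRL.Vpol T P ν 0 p h (t + 1) s' ∂(P t q) with hW
        have hWm : Measurable W := meas_kernel_integral P ihm
        have hWb : ∀ q, |W q| ≤ (T - t : ℕ) * Ch := fun q => abs_integral_le_prob _ ihb'
        set B : ℝ := Ch + (T - t : ℕ) * Ch with hB
        have hB0 : 0 ≤ B := by positivity
        set F : S × A → ℝ := fun q =>
          (h t q.1 q.2 + W q - 0 * Real.log (p t q.1 q.2)) * p t q.1 q.2 with hF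
        have hFm : Measurable F := by
          apply Measurable.mul _ (hpm t)
          exact ((hhm t).add hWm).sub ((Real.measurable_log.comp (hpm t)).const_mul 0)
        have hFb : ∀ q, |F q| ≤ B * p t q.1 q.2 := by
          intro q
          rw [hF]
          simp only [zero_mul, sub_zero]
          rw [abs_mul, abs_of_nonneg (hp0 t q.1 q.2)]
          exact mul_le_mul_of_nonneg_right
            (le_trans (abs_add_le _ _) (add_le_add (hCh t htT q.1 q.2) (hWb q)))
            (hp0 t q.1 q.2)
        have hunfold : ∀ s, IRL.Vpol T P ν 0 p h t s = ∫ a, F (s, a) ∂ν := by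
          intro s
          rw [IRL.Vpol, if_neg (not_lt.2 htT)]
        constructor
        · rw [funext hunfold]
          exact meas_integral_nu ν hFm
        · intro s
          rw [hunfold s]
          have hpint : Integrable (fun a => p t s a) ν :=
            integrable_of_bdd (((hpm t).comp measurable_prodMk_left).aestronglyMeasurable)
              (fun a => hD s a)
          have hFint : Integrable (fun a => F (s, a)) ν := by
            refine integrable_of_bdd (((hFm.comp measurable_prodMk_left)).aestronglyMeasurable)
              (C := B * D) fun a => ?_
            exact le_trans (hFb (s, a))
              (mul_le_mul_of_nonneg_left (le_trans (le_abs_self _) (hD s a)) hB0)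
          have h1 : |∫ a, F (s, a) ∂ν| ≤ ∫ a, B * p t s a ∂ν := by
            refine le_trans ?_ (integral_mono hFint.abs (hpint.const_mul B) fun a => hFb (s, a))
            simpa [Real.norm_eq_abs] using norm_integral_le_integral_norm (fun a => F (s, a)) (μ := ν)
          have h2 : ∫ a, B * p t s a ∂ν = B := by
            rw [integral_const_mul, hp1 t s htT, mul_one]
          rw [h2] at h1
          refine le_trans h1 (le_of_eq ?_)
          rw [hB, show T + 1 - t = (T - t) + 1 from by omega]
          push_cast
          ring
  exact fun t => H (T + 1) t (by omega)

lemma vstar_hasDerivAt (β : ℝ) (hβ : 0 < β) (hν : ν Set.univ ≠ 0) (r h : ℕ → S → A → ℝ)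
    (hrm : ∀ u, Measurable fun q : S × A => r u q.1 q.2)
    (hhm : ∀ u, Measurable fun q : S × A => h u q.1 q.2)
    (Cr Ch : ℝ) (hCr : ∀ u, u ≤ T → ∀ s a, |r u s a| ≤ Cr)
    (hCh : ∀ u, u ≤ T → ∀ s a, |h u s a| ≤ Ch) :
    ∀ t (ε : ℝ) (s : S),
      HasDerivAt (fun e : ℝ => IRL.Vstar T P ν β (fun u s a => r u s a + e * h u s a) t s)
        (IRL.Vpol T P ν 0 (IRL.piStar T P ν β (fun u s a => r u s a + ε * h u s a)) h t s)
        ε := by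
  have hCh0 : 0 ≤ Ch := le_trans (abs_nonneg _)
    (hCh 0 (Nat.zero_le _) (Classical.arbitrary S) (Classical.arbitrary A))
  have hCr0 : 0 ≤ Cr := le_trans (abs_nonneg _)
    (hCr 0 (Nat.zero_le _) (Classical.arbitrary S) (Classical.arbitrary A))
  -- measurability of the perturbed rewards
  have hrem : ∀ e u, Measurable fun q : S × A => r u q.1 q.2 + e * h u q.1 q.2 :=
    fun e u => (hrm u).add ((hhm u).const_mul e)
  have hCre : ∀ (e : ℝ), ∀ u, u ≤ T → ∀ (s : S) (a : A),
      |r u s a + e * h u s a| ≤ Cr + |e| * Ch := by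
    intro e u hu s a
    refine le_trans (abs_add_le _ _) (add_le_add (hCr u hu s a) ?_)
    rw [abs_mul]
    exact mul_le_mul_of_nonneg_left (hCh u hu s a) (abs_nonneg e)
  have hVmeas : ∀ (e : ℝ) u,
      Measurable (IRL.Vstar T P ν β (fun u s a => r u s a + e * h u s a) u) :=
    fun e u => (vstar_meas_bdd T P ν β hβ hν _ (hrem e) (Cr + |e| * Ch) (hCre e) u).1
  -- properties of the soft-optimal policies
  have hpi : ∀ (e : ℝ),
      (∀ u, Measurable fun q : S × A =>
        IRL.piStar T P ν β (fun u s a => r u s a + e * h u s a) u q.1 q.2) ∧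
      (∀ u s a, 0 ≤ IRL.piStar T P ν β (fun u s a => r u s a + e * h u s a) u s a) ∧
      (∀ u, u ≤ T → ∃ D, ∀ s a,
        |IRL.piStar T P ν β (fun u s a => r u s a + e * h u s a) u s a| ≤ D) ∧
      (∀ u s, u ≤ T →
        ∫ a, IRL.piStar T P ν β (fun u s a => r u s a + e * h u s a) u s a ∂ν = 1) :=
    fun e => piStar_props T P ν β hβ hν _ (hrem e) (Cr + |e| * Ch) (hCre e)
  have hVpol : ∀ (e : ℝ) u,
      Measurable (IRL.Vpol T P ν 0
        (IRL.piStar T P ν β (fun u s a => r u s a + e * h u s a)) h u) ∧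
      ∀ s, |IRL.Vpol T P ν 0
        (IRL.piStar T P ν β (fun u s a => r u s a + e * h u s a)) h u s| ≤
          (T + 1 - u : ℕ) * Ch :=
    fun e => vpol_meas_bdd T P ν _ h (hpi e).1 (hpi e).2.1 (hpi e).2.2.1 (hpi e).2.2.2 hhm Ch hCh
  have H : ∀ d t, T + 1 ≤ t + d → ∀ (ε : ℝ) (s : S),
      HasDerivAt (fun e : ℝ => IRL.Vstar T P ν β (fun u s a => r u s a + e * h u s a) t s)
        (IRL.Vpol T P ν 0 (IRL.piStar T P ν β (fun u s a => r u s a + ε * h u s a)) h t s)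
        ε := by
    intro d
    induction d with
    | zero =>
      intro t ht ε s
      have htT : T < t := by omega
      have h0 : (fun e : ℝ => IRL.Vstar T P ν β (fun u s a => r u s a + e * h u s a) t s)
          = fun _ => 0 := funext fun e => by rw [IRL.Vstar, if_pos htT]
      have h1 : IRL.Vpol T P ν 0
          (IRL.piStar T P ν β (fun u s a => r u s a + ε * h u s a)) h t s = 0 := by
        rw [IRL.Vpol, if_pos htT]
      rw [h0, h1]
      exact hasDerivAt_const ε 0
    | succ d ih =>
      intro t ht ε s
      by_cases htT : T < t
      · have h0 : (fun e : ℝ => IRL.Vstar T P ν β (fun u s a => r u s a + e * h u s a) t s)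
            = fun _ => 0 := funext fun e => by rw [IRL.Vstar, if_pos htT]
        have h1 : IRL.Vpol T P ν 0
            (IRL.piStar T P ν β (fun u s a => r u s a + ε * h u s a)) h t s = 0 := by
          rw [IRL.Vpol, if_pos htT]
        rw [h0, h1]
        exact hasDerivAt_const ε 0
      · push_neg at htT
        have IH := ih (t + 1) (by omega)
        set C2 : ℝ := Cr + (|ε| + 2) * Ch with hC2
        set K2 : ℝ := C2 + β * |Real.log (ν Set.univ).toReal| with hK2
        set M2 : ℝ := C2 + (T - t : ℕ) * K2 with hM2
        have hC2e : ∀ (e : ℝ), |e - ε| ≤ 2 → ∀ u, u ≤ T → ∀ (s : S) (a : A),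
            |r u s a + e * h u s a| ≤ C2 := by
          intro e he u hu s a
          refine le_trans (hCre e u hu s a) ?_
          rw [hC2]
          have : |e| ≤ |ε| + 2 := by
            have := abs_sub_abs_le_abs_sub e ε
            linarith
          nlinarith
        -- Vstar bound on the 2-ball
        have hVbd2 : ∀ (e : ℝ), |e - ε| ≤ 2 → ∀ s',
            |IRL.Vstar T P ν β (fun u s a => r u s a + e * h u s a) (t + 1) s'|
              ≤ (T - t : ℕ) * K2 := by
          intro e he s'
          have := (vstar_meas_bdd T P ν β hβ hν _ (hrem e) C2 (hC2e e he) (t + 1)).2 s'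
          rwa [show T + 1 - (t + 1) = T - t from by omega] at this
        -- Vpol bound (uniform)
        have hVpolbd : ∀ (e : ℝ) s',
            |IRL.Vpol T P ν 0
              (IRL.piStar T P ν β (fun u s a => r u s a + e * h u s a)) h (t + 1) s'|
              ≤ (T - t : ℕ) * Ch := by
          intro e s'
          have := (hVpol e (t + 1)).2 s'
          rwa [show T + 1 - (t + 1) = T - t from by omega] at this
        -- Step A : derivative of the kernel integral of Vstar
        have hW : ∀ (q : S × A) (e : ℝ), |e - ε| ≤ 1 →
            HasDerivAt
              (fun e' : ℝ => ∫ s', IRL.Vstar T P ν β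
                (fun u s a => r u s a + e' * h u s a) (t + 1) s' ∂(P t q))
              (∫ s', IRL.Vpol T P ν 0
                (IRL.piStar T P ν β (fun u s a => r u s a + e * h u s a)) h (t + 1) s'
                ∂(P t q)) e := by
          intro q e he
          refine (hasDerivAt_integral_of_dominated_loc_of_deriv_le (μ := P t q)
            (F := fun e' s' => IRL.Vstar T P ν β
              (fun u s a => r u s a + e' * h u s a) (t + 1) s')
            (F' := fun e' s' => IRL.Vpol T P ν 0
              (IRL.piStar T P ν β (fun u s a => r u s a + e' * h u s a)) h (t + 1) s')
            (bound := fun _ => (T - t : ℕ) * Ch) (Metric.ball_mem_nhds _ one_pos)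
            (Eventually.of_forall fun e' => (hVmeas e' (t + 1)).aestronglyMeasurable)
            ?_ ((hVpol e (t + 1)).1.aestronglyMeasurable) ?_ (integrable_const _) ?_).2
          · exact integrable_of_bdd (hVmeas e (t + 1)).aestronglyMeasurable
              (C := (T - t : ℕ) * K2) (hVbd2 e (le_trans he one_le_two))
          · refine Eventually.of_forall fun s' => fun e' he' => ?_
            rw [Real.norm_eq_abs]
            exact hVpolbd e' s'
          · exact Eventually.of_forall fun s' => fun e' he' => IH e' s'
        -- Step B : derivative of the exponential integral
        have hQmeas : ∀ (e : ℝ), Measurable fun a =>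
            IRL.Qstar T P ν β (fun u s a => r u s a + e * h u s a) t s a :=
          fun e => ((qstar_meas_bdd T P ν β hβ hν _ (hrem e) (Cr + |e| * Ch)
            (hCre e) t).1).comp measurable_prodMk_left
        have hQbd : ∀ (e : ℝ), |e - ε| ≤ 2 → ∀ a,
            |IRL.Qstar T P ν β (fun u s a => r u s a + e * h u s a) t s a| ≤ M2 := by
          intro e he a
          exact (qstar_meas_bdd T P ν β hβ hν _ (hrem e) C2 (hC2e e he) t).2 htT s a
        have hB :=
          hasDerivAt_integral_of_dominated_loc_of_deriv_le (μ := ν) (x₀ := ε)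
            (F := fun e a => Real.exp
              (IRL.Qstar T P ν β (fun u s a => r u s a + e * h u s a) t s a / β))
            (F' := fun e a => Real.exp
              (IRL.Qstar T P ν β (fun u s a => r u s a + e * h u s a) t s a / β) *
              ((h t s a + ∫ s', IRL.Vpol T P ν 0
                (IRL.piStar T P ν β (fun u s a => r u s a + e * h u s a)) h (t + 1) s'
                  ∂(P t (s, a))) / β))
            (bound := fun _ => Real.exp (M2 / β) * ((Ch + (T - t : ℕ) * Ch) / β)) (Metric.ball_mem_nhds _ one_pos)
            (Eventually.of_forall fun e =>
              (Real.measurable_exp.comp ((hQmeas e).div_const β)).aestronglyMeasurable)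
            ?_ ?_ ?_ (integrable_const _) ?_
        rotate_left
        · refine integrable_of_bdd
            (Real.measurable_exp.comp ((hQmeas ε).div_const β)).aestronglyMeasurable
            (C := Real.exp (M2 / β)) fun a => ?_
          rw [abs_of_pos (Real.exp_pos _)]
          apply Real.exp_le_exp.2
          apply div_le_div_of_nonneg_right ?_ hβ.le
          · exact le_trans (le_abs_self _) (hQbd ε (by simp) a)
        · refine Measurable.aestronglyMeasurable ?_
          refine (Real.measurable_exp.comp ((hQmeas ε).div_const β)).mul ?_
          refine Measurable.div_const (Measurable.add ?_ ?_) β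
          · exact (hhm t).comp measurable_prodMk_left
          · exact (meas_kernel_integral P (hVpol ε (t + 1)).1).comp measurable_prodMk_left
        · refine Eventually.of_forall fun a => fun e he => ?_
          have he' : |e - ε| ≤ 1 := le_of_lt (by rwa [Metric.mem_ball, Real.dist_eq] at he)
          rw [Real.norm_eq_abs, abs_mul, abs_of_pos (Real.exp_pos _), abs_div,
            abs_of_pos hβ]
          refine mul_le_mul ?_ ?_ (by positivity) (le_of_lt (Real.exp_pos _))
          · apply Real.exp_le_exp.2
            apply div_le_div_of_nonneg_right ?_ hβ.le
            · exact le_trans (le_abs_self _) (hQbd e (le_trans he' one_le_two) a)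
          · apply div_le_div_of_nonneg_right ?_ hβ.le
            · exact le_trans (abs_add_le _ _) (add_le_add (hCh t htT s a)
                (abs_integral_le_prob _ fun s' => hVpolbd e s'))
        · refine Eventually.of_forall fun a => fun e he => ?_
          have he' : |e - ε| ≤ 1 := le_of_lt (by rwa [Metric.mem_ball, Real.dist_eq] at he)
          have hbase : HasDerivAt (fun e'' : ℝ => r t s a + e'' * h t s a) (h t s a) e :=
            (hasDerivAt_mul_const (h t s a)).const_add (r t s a)
          have hsum := (hbase.add (hW (s, a) e he')).div_const β
          have := hsum.exp
          simpa [IRL.Qstar, Pi.add_def] using this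
        obtain ⟨-, hIder⟩ := hB
        -- positivity of the normalizing integral
        have hIpos : 0 < ∫ a, Real.exp
            (IRL.Qstar T P ν β (fun u s a => r u s a + ε * h u s a) t s a / β) ∂ν :=
          (integral_exp_bdd ν hν ((hQmeas ε).div_const β) (M := M2 / β)
            (fun a => by
              rw [abs_div, abs_of_pos hβ]
              apply div_le_div_of_nonneg_right ?_ hβ.le
              exact hQbd ε (by simp) a)).2
        -- Step C : conclude
        have hfun : (fun e : ℝ => IRL.Vstar T P ν β (fun u s a => r u s a + e * h u s a) t s)
            = fun e : ℝ => β * Real.log (∫ a, Real.exp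
              (IRL.Qstar T P ν β (fun u s a => r u s a + e * h u s a) t s a / β) ∂ν) :=
          funext fun e => by rw [IRL.Vstar, if_neg (not_lt.2 htT)]; rfl
        rw [hfun]
        have hlog := (hIder.log hIpos.ne').const_mul β
        refine hlog.congr_deriv (Eq.symm ?_)
        -- value identification
        have hVeq : IRL.Vstar T P ν β (fun u s a => r u s a + ε * h u s a) t s
            = β * Real.log (∫ a, Real.exp
              (IRL.Qstar T P ν β (fun u s a => r u s a + ε * h u s a) t s a / β) ∂ν) := by
          rw [IRL.Vstar, if_neg (not_lt.2 htT)]; rfl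
        rw [IRL.Vpol, if_neg (not_lt.2 htT)]
        simp only [zero_mul, sub_zero]
        have hpoint : ∀ a,
            (h t s a + ∫ s', IRL.Vpol T P ν 0
              (IRL.piStar T P ν β (fun u s a => r u s a + ε * h u s a)) h (t + 1) s'
                ∂(P t (s, a))) *
              IRL.piStar T P ν β (fun u s a => r u s a + ε * h u s a) t s a
            = β * ((Real.exp
                (IRL.Qstar T P ν β (fun u s a => r u s a + ε * h u s a) t s a / β) *
              ((h t s a + ∫ s', IRL.Vpol T P ν 0
                (IRL.piStar T P ν β (fun u s a => r u s a + ε * h u s a)) h (t + 1) s'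
                  ∂(P t (s, a))) / β)) /
              (∫ a, Real.exp
                (IRL.Qstar T P ν β (fun u s a => r u s a + ε * h u s a) t s a / β) ∂ν)) := by
          intro a
          rw [IRL.piStar, hVeq,
            show (IRL.Qstar T P ν β (fun u s a => r u s a + ε * h u s a) t s a
              - β * Real.log (∫ a, Real.exp
                (IRL.Qstar T P ν β (fun u s a => r u s a + ε * h u s a) t s a / β) ∂ν)) / β
              = IRL.Qstar T P ν β (fun u s a => r u s a + ε * h u s a) t s a / β
                - Real.log (∫ a, Real.exp
                  (IRL.Qstar T P ν β (fun u s a => r u s a + ε * h u s a) t s a / β) ∂ν)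
              from by field_simp,
            Real.exp_sub, Real.exp_log hIpos]
          field_simp
        calc (∫ a, (h t s a + ∫ s', IRL.Vpol T P ν 0
              (IRL.piStar T P ν β (fun u s a => r u s a + ε * h u s a)) h (t + 1) s'
                ∂(P t (s, a))) *
              IRL.piStar T P ν β (fun u s a => r u s a + ε * h u s a) t s a ∂ν)
            = ∫ a, β * ((Real.exp
                (IRL.Qstar T P ν β (fun u s a => r u s a + ε * h u s a) t s a / β) *
              ((h t s a + ∫ s', IRL.Vpol T P ν 0
                (IRL.piStar T P ν β (fun u s a => r u s a + ε * h u s a)) h (t + 1) s'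
                  ∂(P t (s, a))) / β)) /
              (∫ a, Real.exp
                (IRL.Qstar T P ν β (fun u s a => r u s a + ε * h u s a) t s a / β) ∂ν)) ∂ν := by
              simp_rw [hpoint]
          _ = _ := by
              rw [integral_const_mul]
              congr 1
              rw [integral_div]
  exact fun t ε s => H (T + 1) t (by omega) ε s

lemma integral_vstar_hasDerivAt (β : ℝ) (hβ : 0 < β) (hν : ν Set.univ ≠ 0)
    (r h : ℕ → S → A → ℝ)
    (hrm : ∀ u, Measurable fun q : S × A => r u q.1 q.2)
    (hhm : ∀ u, Measurable fun q : S × A => h u q.1 q.2)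
    (Cr Ch : ℝ) (hCr : ∀ u, u ≤ T → ∀ s a, |r u s a| ≤ Cr)
    (hCh : ∀ u, u ≤ T → ∀ s a, |h u s a| ≤ Ch)
    (m : Measure S) [IsProbabilityMeasure m] (u : ℕ) (ε : ℝ) :
    HasDerivAt
      (fun e : ℝ => ∫ s, IRL.Vstar T P ν β (fun u s a => r u s a + e * h u s a) u s ∂m)
      (∫ s, IRL.Vpol T P ν 0
        (IRL.piStar T P ν β (fun u s a => r u s a + ε * h u s a)) h u s ∂m) ε := by
  have hCh0 : 0 ≤ Ch := le_trans (abs_nonneg _)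
    (hCh 0 (Nat.zero_le _) (Classical.arbitrary S) (Classical.arbitrary A))
  have hrem : ∀ (e : ℝ) u, Measurable fun q : S × A => r u q.1 q.2 + e * h u q.1 q.2 :=
    fun e u => (hrm u).add ((hhm u).const_mul e)
  have hCre : ∀ (e : ℝ), ∀ u, u ≤ T → ∀ (s : S) (a : A),
      |r u s a + e * h u s a| ≤ Cr + |e| * Ch := by
    intro e u hu s a
    refine le_trans (abs_add_le _ _) (add_le_add (hCr u hu s a) ?_)
    rw [abs_mul]
    exact mul_le_mul_of_nonneg_left (hCh u hu s a) (abs_nonneg e)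
  have hVmeas : ∀ (e : ℝ) u,
      Measurable (IRL.Vstar T P ν β (fun u s a => r u s a + e * h u s a) u) :=
    fun e u => (vstar_meas_bdd T P ν β hβ hν _ (hrem e) (Cr + |e| * Ch) (hCre e) u).1
  have hpi : ∀ (e : ℝ), _ :=
    fun e => piStar_props T P ν β hβ hν _ (hrem e) (Cr + |e| * Ch) (hCre e)
  have hVpol : ∀ (e : ℝ) u,
      Measurable (IRL.Vpol T P ν 0
        (IRL.piStar T P ν β (fun u s a => r u s a + e * h u s a)) h u) ∧
      ∀ s, |IRL.Vpol T P ν 0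
        (IRL.piStar T P ν β (fun u s a => r u s a + e * h u s a)) h u s| ≤
          (T + 1 - u : ℕ) * Ch :=
    fun e => vpol_meas_bdd T P ν _ h (hpi e).1 (hpi e).2.1 (hpi e).2.2.1 (hpi e).2.2.2 hhm Ch hCh
  refine (hasDerivAt_integral_of_dominated_loc_of_deriv_le (μ := m) (x₀ := ε)
    (F := fun e s => IRL.Vstar T P ν β (fun u s a => r u s a + e * h u s a) u s)
    (F' := fun e s => IRL.Vpol T P ν 0
      (IRL.piStar T P ν β (fun u s a => r u s a + e * h u s a)) h u s)
    (bound := fun _ => (T + 1 - u : ℕ) * Ch) (Metric.ball_mem_nhds _ one_pos)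
    (Eventually.of_forall fun e => (hVmeas e u).aestronglyMeasurable)
    ?_ ((hVpol ε u).1.aestronglyMeasurable) ?_ (integrable_const _) ?_).2
  · exact integrable_of_bdd (hVmeas ε u).aestronglyMeasurable
      (C := (T + 1 - u : ℕ) * (Cr + |ε| * Ch + β * |Real.log (ν Set.univ).toReal|))
      (vstar_meas_bdd T P ν β hβ hν _ (hrem ε) (Cr + |ε| * Ch) (hCre ε) u).2
  · refine Eventually.of_forall fun s => fun e he => ?_
    rw [Real.norm_eq_abs]
    exact (hVpol e u).2 s
  · exact Eventually.of_forall fun s => fun e he =>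
      vstar_hasDerivAt T P ν β hβ hν r h hrm hhm Cr Ch hCr hCh u e s

lemma qstar_hasDerivAt (β : ℝ) (hβ : 0 < β) (hν : ν Set.univ ≠ 0) (r h : ℕ → S → A → ℝ)
    (hrm : ∀ u, Measurable fun q : S × A => r u q.1 q.2)
    (hhm : ∀ u, Measurable fun q : S × A => h u q.1 q.2)
    (Cr Ch : ℝ) (hCr : ∀ u, u ≤ T → ∀ s a, |r u s a| ≤ Cr)
    (hCh : ∀ u, u ≤ T → ∀ s a, |h u s a| ≤ Ch) (t : ℕ) (ε : ℝ) (s : S) (a : A) :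
    HasDerivAt (fun e : ℝ => IRL.Qstar T P ν β (fun u s a => r u s a + e * h u s a) t s a)
      (IRL.Qpol T P ν 0 (IRL.piStar T P ν β (fun u s a => r u s a + ε * h u s a)) h t s a)
      ε := by
  have hbase : HasDerivAt (fun e : ℝ => r t s a + e * h t s a) (h t s a) ε :=
    (hasDerivAt_mul_const (h t s a)).const_add (r t s a)
  have hint := integral_vstar_hasDerivAt T P ν β hβ hν r h hrm hhm Cr Ch hCr hCh
    (P t (s, a)) (t + 1) ε
  have := hbase.add hint
  simpa [IRL.Qstar, IRL.Qpol, Pi.add_def] using this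

/-- trajectory coordinate functional -/
def gfun (h : ℕ → S → A → ℝ) (t : ℕ) : (ℕ → S × A) → ℝ :=
  fun τ => h t (τ t).1 (τ t).2

lemma dens_apply (p : ℕ → S → A → ℝ)
    (hpm : ∀ u, Measurable fun q : S × A => p u q.1 q.2) (u : ℕ) (s : S) :
    IRL.densKernel ν p u s = ν.withDensity (fun a => ENNReal.ofReal (p u s a)) := by
  have hm : Measurable (Function.uncurry fun (s : S) (a : A) => ENNReal.ofReal (p u s a)) := by
    exact ENNReal.measurable_ofReal.comp (hpm u)
  rw [IRL.densKernel, Kernel.withDensity_apply _ hm, Kernel.const_apply]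

lemma dens_integral (p : ℕ → S → A → ℝ)
    (hpm : ∀ u, Measurable fun q : S × A => p u q.1 q.2)
    (hp0 : ∀ u s a, 0 ≤ p u s a) (u : ℕ) (s : S) (f : A → ℝ) :
    ∫ x, f x ∂(IRL.densKernel ν p u s) = ∫ a, p u s a * f a ∂ν := by
  rw [dens_apply ν p hpm u s]
  have hm : Measurable fun a => Real.toNNReal (p u s a) := by
    exact measurable_real_toNNReal.comp ((hpm u).comp measurable_prodMk_left)
  have heq : (fun a => ENNReal.ofReal (p u s a))
      = fun a => ((Real.toNNReal (p u s a) : ℝ≥0∞)) := rfl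
  rw [heq, integral_withDensity_eq_integral_smul hm f]
  congr 1 with a
  rw [NNReal.smul_def, Real.coe_toNNReal _ (hp0 u s a), smul_eq_mul]

lemma dens_prob (p : ℕ → S → A → ℝ)
    (hpm : ∀ u, Measurable fun q : S × A => p u q.1 q.2)
    (hp0 : ∀ u s a, 0 ≤ p u s a)
    (hpD : ∀ u, u ≤ T → ∃ D, ∀ s a, |p u s a| ≤ D)
    (hp1 : ∀ u s, u ≤ T → ∫ a, p u s a ∂ν = 1)
    (u : ℕ) (hu : u ≤ T) (s : S) : IsProbabilityMeasure (IRL.densKernel ν p u s) := by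
  obtain ⟨D, hD⟩ := hpD u hu
  have hint : Integrable (fun a => p u s a) ν :=
    integrable_of_bdd (((hpm u).comp measurable_prodMk_left).aestronglyMeasurable)
      (fun a => hD s a)
  constructor
  rw [dens_apply ν p hpm u s, withDensity_apply _ MeasurableSet.univ,
    setLIntegral_univ,
    ← ofReal_integral_eq_lintegral_ofReal hint (Eventually.of_forall fun a => hp0 u s a),
    hp1 u s hu]
  simp

lemma polExp_const (pol : ℕ → Kernel S A)
    (hprob : ∀ u s, u ≤ T → IsProbabilityMeasure (pol u s)) (c : ℝ) :
    ∀ t s, IRL.polExp T P pol (fun _ => c) t s = c := by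
  have H : ∀ d t, T + 1 ≤ t + d → ∀ s : S, IRL.polExp T P pol (fun _ => c) t s = c := by
    intro d
    induction d with
    | zero =>
      intro t ht s
      rw [IRL.polExp, if_pos (by omega : T < t)]
    | succ d ih =>
      intro t ht s
      by_cases htT : T < t
      · rw [IRL.polExp, if_pos htT]
      · rw [IRL.polExp, if_neg htT]
        push_neg at htT
        haveI := hprob t s htT
        simp only [ih (t + 1) (by omega)]
        simp [integral_const, measure_univ]
  exact fun t s => H (T + 1) t (by omega) s

lemma polExp_g_eq (pol : ℕ → Kernel S A) (h : ℕ → S → A → ℝ) {t u : ℕ} (hu : u ≤ T)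
    (hut : u ≠ t) (s : S) :
    IRL.polExp T P pol (gfun h t) u s
      = ∫ a, ∫ s', IRL.polExp T P pol (gfun h t) (u + 1) s' ∂(P u (s, a)) ∂(pol u s) := by
  rw [IRL.polExp, if_neg (not_lt.2 hu)]
  have heq : ∀ a : A, (fun τ => gfun h t (Function.update τ u (s, a))) = gfun h t := by
    intro a
    funext τ
    simp [gfun, Function.update_of_ne (Ne.symm hut)]
  simp_rw [heq]

lemma polExp_g_self (pol : ℕ → Kernel S A)
    (hprob : ∀ u s, u ≤ T → IsProbabilityMeasure (pol u s)) (h : ℕ → S → A → ℝ)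
    {t : ℕ} (ht : t ≤ T) (s : S) :
    IRL.polExp T P pol (gfun h t) t s = ∫ a, h t s a ∂(pol t s) := by
  rw [IRL.polExp, if_neg (not_lt.2 ht)]
  have heq : ∀ a : A, (fun τ => gfun h t (Function.update τ t (s, a))) = fun _ => h t s a := by
    intro a
    funext τ
    simp [gfun]
  simp_rw [heq, polExp_const T P pol hprob]
  simp [integral_const, measure_univ]

lemma abs_integral_mul_density_le {p f : A → ℝ} (hpm : Measurable p) (hp0 : ∀ a, 0 ≤ p a)
    {D : ℝ} (hpD : ∀ a, |p a| ≤ D) (hp1 : ∫ a, p a ∂ν = 1) (hfm : Measurable f) {B : ℝ}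
    (hB : ∀ a, |f a| ≤ B) : |∫ a, p a * f a ∂ν| ≤ B := by
  have hB0 : 0 ≤ B := le_trans (abs_nonneg _) (hB (Classical.arbitrary A))
  have hpint : Integrable p ν := integrable_of_bdd hpm.aestronglyMeasurable hpD
  have hD0 : 0 ≤ D := le_trans (abs_nonneg _) (hpD (Classical.arbitrary A))
  have hint : Integrable (fun a => p a * f a) ν :=
    integrable_of_bdd ((hpm.mul hfm).aestronglyMeasurable) (C := D * B) fun a => by
      rw [abs_mul]
      exact mul_le_mul (hpD a) (hB a) (abs_nonneg _) hD0
  have h1 : |∫ a, p a * f a ∂ν| ≤ ∫ a, B * p a ∂ν := by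
    refine le_trans ?_ (integral_mono hint.abs (hpint.const_mul B) fun a => ?_)
    · have h2 := norm_integral_le_integral_norm (fun a => p a * f a) (μ := ν)
      simp only [Real.norm_eq_abs] at h2
      exact h2
    · rw [abs_mul, abs_of_nonneg (hp0 a), mul_comm B (p a)]
      exact mul_le_mul_of_nonneg_left (hB a) (hp0 a)
  rwa [integral_const_mul, hp1, mul_one] at h1

lemma polExp_g_meas_bdd (p h : ℕ → S → A → ℝ)
    (hpm : ∀ u, Measurable fun q : S × A => p u q.1 q.2)
    (hp0 : ∀ u s a, 0 ≤ p u s a)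
    (hpD : ∀ u, u ≤ T → ∃ D, ∀ s a, |p u s a| ≤ D)
    (hp1 : ∀ u s, u ≤ T → ∫ a, p u s a ∂ν = 1)
    (hhm : ∀ u, Measurable fun q : S × A => h u q.1 q.2) (Ch : ℝ)
    (hCh : ∀ u, u ≤ T → ∀ s a, |h u s a| ≤ Ch) :
    ∀ u t, t ≤ T →
      Measurable (fun s => IRL.polExp T P (IRL.densKernel ν p) (gfun h t) u s) ∧
      ∀ s, |IRL.polExp T P (IRL.densKernel ν p) (gfun h t) u s| ≤ Ch := by
  have hprob : ∀ u s, u ≤ T → IsProbabilityMeasure (IRL.densKernel ν p u s) :=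
    fun u s hu => dens_prob T ν p hpm hp0 hpD hp1 u hu s
  have H : ∀ d u, T + 1 ≤ u + d → ∀ t, t ≤ T →
      Measurable (fun s => IRL.polExp T P (IRL.densKernel ν p) (gfun h t) u s) ∧
      ∀ s, |IRL.polExp T P (IRL.densKernel ν p) (gfun h t) u s| ≤ Ch := by
    intro d
    induction d with
    | zero =>
      intro u hu t ht
      have huT : T < u := by omega
      have h0 : ∀ s : S, IRL.polExp T P (IRL.densKernel ν p) (gfun h t) u s
          = gfun h t (fun _ => (Classical.arbitrary S, Classical.arbitrary A)) :=
        fun s => by rw [IRL.polExp, if_pos huT]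
      exact ⟨by rw [funext h0]; exact measurable_const,
        fun s => by rw [h0 s]; exact hCh t ht _ _⟩
    | succ d ih =>
      intro u hu t ht
      by_cases huT : T < u
      · have h0 : ∀ s : S, IRL.polExp T P (IRL.densKernel ν p) (gfun h t) u s
            = gfun h t (fun _ => (Classical.arbitrary S, Classical.arbitrary A)) :=
          fun s => by rw [IRL.polExp, if_pos huT]
        exact ⟨by rw [funext h0]; exact measurable_const,
          fun s => by rw [h0 s]; exact hCh t ht _ _⟩
      · push_neg at huT
        obtain ⟨D, hD⟩ := hpD u huT
        by_cases hut : u = t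
        · subst hut
          have h0 : ∀ s, IRL.polExp T P (IRL.densKernel ν p) (gfun h u) u s
              = ∫ a, p u s a * h u s a ∂ν := fun s => by
            rw [polExp_g_self T P (IRL.densKernel ν p) hprob h huT s,
              dens_integral ν p hpm hp0]
          constructor
          · rw [funext h0]
            exact meas_integral_nu ν ((hpm u).mul (hhm u))
          · intro s
            rw [h0 s]
            exact abs_integral_mul_density_le ν ((hpm u).comp measurable_prodMk_left)
              (hp0 u s) (hD s) (hp1 u s huT) ((hhm u).comp measurable_prodMk_left)
              (fun a => hCh u huT s a)
        · obtain ⟨ihm, ihb⟩ := ih (u + 1) (by omega) t ht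
          set G : S × A → ℝ := fun q =>
            ∫ s', IRL.polExp T P (IRL.densKernel ν p) (gfun h t) (u + 1) s' ∂(P u q) with hG
          have hGm : Measurable G := meas_kernel_integral P ihm
          have hGb : ∀ q, |G q| ≤ Ch := fun q => abs_integral_le_prob _ ihb
          have h0 : ∀ s, IRL.polExp T P (IRL.densKernel ν p) (gfun h t) u s
              = ∫ a, p u s a * G (s, a) ∂ν := fun s => by
            rw [polExp_g_eq T P (IRL.densKernel ν p) h huT hut s,
              dens_integral ν p hpm hp0]
          constructor
          · rw [funext h0]
            exact meas_integral_nu ν ((hpm u).mul hGm)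
          · intro s
            rw [h0 s]
            exact abs_integral_mul_density_le ν ((hpm u).comp measurable_prodMk_left)
              (hp0 u s) (hD s) (hp1 u s huT) (hGm.comp measurable_prodMk_left)
              (fun a => hGb (s, a))
  exact fun u => H (T + 1) u (by omega)

lemma sum_polExp (p h : ℕ → S → A → ℝ)
    (hpm : ∀ u, Measurable fun q : S × A => p u q.1 q.2)
    (hp0 : ∀ u s a, 0 ≤ p u s a)
    (hpD : ∀ u, u ≤ T → ∃ D, ∀ s a, |p u s a| ≤ D)
    (hp1 : ∀ u s, u ≤ T → ∫ a, p u s a ∂ν = 1)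
    (hhm : ∀ u, Measurable fun q : S × A => h u q.1 q.2) (Ch : ℝ)
    (hCh : ∀ u, u ≤ T → ∀ s a, |h u s a| ≤ Ch) :
    ∀ u s, ∑ t ∈ Finset.Icc u T, IRL.polExp T P (IRL.densKernel ν p) (gfun h t) u s
      = IRL.Vpol T P ν 0 p h u s := by
  have hprob : ∀ u s, u ≤ T → IsProbabilityMeasure (IRL.densKernel ν p u s) :=
    fun u s hu => dens_prob T ν p hpm hp0 hpD hp1 u hu s
  have hmb := polExp_g_meas_bdd T P ν p h hpm hp0 hpD hp1 hhm Ch hCh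
  have hvpol := vpol_meas_bdd T P ν p h hpm hp0 hpD hp1 hhm Ch hCh
  have H : ∀ d u, T + 1 ≤ u + d → ∀ s,
      ∑ t ∈ Finset.Icc u T, IRL.polExp T P (IRL.densKernel ν p) (gfun h t) u s
        = IRL.Vpol T P ν 0 p h u s := by
    intro d
    induction d with
    | zero =>
      intro u hu s
      rw [Finset.Icc_eq_empty (by omega), Finset.sum_empty, IRL.Vpol,
        if_pos (by omega : T < u)]
    | succ d ih =>
      intro u hu s
      by_cases huT : T < u
      · rw [Finset.Icc_eq_empty (by omega), Finset.sum_empty, IRL.Vpol, if_pos huT]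
      · push_neg at huT
        obtain ⟨D, hD⟩ := hpD u huT
        -- split off the `t = u` term
        rw [← Finset.Ioc_insert_left huT, Finset.sum_insert Finset.left_notMem_Ioc,
          ← Finset.Icc_add_one_left_eq_Ioc]
        -- the `t = u` term
        rw [polExp_g_self T P (IRL.densKernel ν p) hprob h huT s, dens_integral ν p hpm hp0]
        -- the remaining terms
        have hterm : ∀ t ∈ Finset.Icc (u + 1) T,
            IRL.polExp T P (IRL.densKernel ν p) (gfun h t) u s
              = ∫ a, p u s a *
                  (∫ s', IRL.polExp T P (IRL.densKernel ν p) (gfun h t) (u + 1) s'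
                    ∂(P u (s, a))) ∂ν := by
          intro t htmem
          rw [Finset.mem_Icc] at htmem
          rw [polExp_g_eq T P (IRL.densKernel ν p) h huT (by omega) s,
            dens_integral ν p hpm hp0]
        rw [Finset.sum_congr rfl hterm]
        have hGm : ∀ t, t ≤ T → Measurable fun q : S × A =>
            ∫ s', IRL.polExp T P (IRL.densKernel ν p) (gfun h t) (u + 1) s' ∂(P u q) :=
          fun t ht => meas_kernel_integral P (hmb (u + 1) t ht).1
        have hGb : ∀ t, t ≤ T → ∀ q : S × A,
            |∫ s', IRL.polExp T P (IRL.densKernel ν p) (gfun h t) (u + 1) s' ∂(P u q)| ≤ Ch :=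
          fun t ht q => abs_integral_le_prob _ (hmb (u + 1) t ht).2
        have hCh0 : 0 ≤ Ch := le_trans (abs_nonneg _)
          (hCh 0 (Nat.zero_le _) (Classical.arbitrary S) (Classical.arbitrary A))
        have hD0 : 0 ≤ D := le_trans (abs_nonneg _) (hD (Classical.arbitrary S)
          (Classical.arbitrary A))
        have hintg : ∀ t ∈ Finset.Icc (u + 1) T, Integrable (fun a => p u s a *
            (∫ s', IRL.polExp T P (IRL.densKernel ν p) (gfun h t) (u + 1) s'
              ∂(P u (s, a)))) ν := by
          intro t htmem
          rw [Finset.mem_Icc] at htmem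
          refine integrable_of_bdd ((((hpm u).comp measurable_prodMk_left).mul
            ((hGm t htmem.2).comp measurable_prodMk_left)).aestronglyMeasurable)
            (C := D * Ch) fun a => ?_
          rw [abs_mul]
          exact mul_le_mul (hD s a) (hGb t htmem.2 (s, a)) (abs_nonneg _) hD0
        rw [← integral_finset_sum _ hintg]
        -- push the sum inside
        have hswap : ∀ a, (∑ t ∈ Finset.Icc (u + 1) T, p u s a *
            (∫ s', IRL.polExp T P (IRL.densKernel ν p) (gfun h t) (u + 1) s' ∂(P u (s, a))))
            = p u s a * ∫ s', IRL.Vpol T P ν 0 p h (u + 1) s' ∂(P u (s, a)) := by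
          intro a
          rw [← Finset.mul_sum]
          congr 1
          rw [← integral_finset_sum _ (fun t htmem => ?_)]
          · congr 1
            funext s'
            exact ih (u + 1) (by omega) s'
          · rw [Finset.mem_Icc] at htmem
            exact integrable_of_bdd ((hmb (u + 1) t htmem.2).1.aestronglyMeasurable)
              (hmb (u + 1) t htmem.2).2
        rw [integral_congr_ae (Eventually.of_forall hswap)]
        -- combine
        have hWm : Measurable fun q : S × A =>
            ∫ s', IRL.Vpol T P ν 0 p h (u + 1) s' ∂(P u q) :=
          meas_kernel_integral P (hvpol (u + 1)).1
        have hWb : ∀ q : S × A, |∫ s', IRL.Vpol T P ν 0 p h (u + 1) s' ∂(P u q)|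
            ≤ (T + 1 - (u + 1) : ℕ) * Ch := fun q => abs_integral_le_prob _ (hvpol (u + 1)).2
        have hint1 : Integrable (fun a => p u s a * h u s a) ν :=
          integrable_of_bdd ((((hpm u).comp measurable_prodMk_left).mul
            ((hhm u).comp measurable_prodMk_left)).aestronglyMeasurable) (C := D * Ch)
            fun a => by
              rw [abs_mul]
              exact mul_le_mul (hD s a) (hCh u huT s a) (abs_nonneg _) hD0
        have hint2 : Integrable (fun a => p u s a *
            ∫ s', IRL.Vpol T P ν 0 p h (u + 1) s' ∂(P u (s, a))) ν :=
          integrable_of_bdd ((((hpm u).comp measurable_prodMk_left).mul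
            (hWm.comp measurable_prodMk_left)).aestronglyMeasurable)
            (C := D * ((T + 1 - (u + 1) : ℕ) * Ch)) fun a => by
              rw [abs_mul]
              exact mul_le_mul (hD s a) (hWb (s, a)) (abs_nonneg _) hD0
        rw [← integral_add hint1 hint2, IRL.Vpol, if_neg (not_lt.2 huT)]
        refine integral_congr_ae (Eventually.of_forall fun a => ?_)
        simp only [zero_mul, sub_zero]
        ring
  exact fun u => H (T + 1) u (by omega)

end IRLAux
end AuxProof


open MeasureTheory ProbabilityTheory Real
open scoped ENNReal

/-- **Directional derivative of the soft-optimal value in the reward** (Lemma `first_der`).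
For `β > 0` and bounded measurable rewards `r, h`, with `r^ε := r + εh` and
`π^ε := π*_{r^ε}`, the maps `ε ↦ V*_{t,r^ε}(s)`, `ε ↦ Q*_{t,r^ε}(s,a)` and `ε ↦ J*(r^ε)` are
differentiable with derivatives `V^{π^ε,0}_{t,h}(s)`, `Q^{π^ε,0}_{t,h}(s,a)` and
`J⁰(h,π^ε) = Σ_t E^{π^ε}[h_t(s_t,a_t)]` respectively. -/
theorem directional_derivative_soft_optimal_value
    {S A : Type*} [MeasurableSpace S] [MeasurableSpace A] [Nonempty S] [Nonempty A]
    (T : ℕ) (hT : 1 ≤ T)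
    (P0 : Measure S) [IsProbabilityMeasure P0]
    (P : ℕ → Kernel (S × A) S) [∀ t, IsMarkovKernel (P t)]
    (ν : Measure A) [IsFiniteMeasure ν] (hν : ν Set.univ ≠ 0)
    (β : ℝ) (hβ : 0 < β)
    (r h : ℕ → S → A → ℝ) (hr : IRL.IsBddReward r) (hh : IRL.IsBddReward h)
    -- the perturbed reward `r^ε = r + εh`
    (rPert : ℝ → ℕ → S → A → ℝ)
    (hrPert : rPert = fun ε t s a => r t s a + ε * h t s a) :
    -- derivative of `V*` and `Q*`
    (∀ ε : ℝ, ∀ t, 1 ≤ t → t ≤ T →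
      (∀ s, HasDerivAt (fun e : ℝ => IRL.Vstar T P ν β (rPert e) t s)
        (IRL.Vpol T P ν 0 (IRL.piStar T P ν β (rPert ε)) h t s) ε) ∧
      (∀ s a, HasDerivAt (fun e : ℝ => IRL.Qstar T P ν β (rPert e) t s a)
        (IRL.Qpol T P ν 0 (IRL.piStar T P ν β (rPert ε)) h t s a) ε)) ∧
    -- derivative of `J*`
    (∀ ε : ℝ, HasDerivAt (fun e : ℝ => IRL.Jstar T P ν P0 β (rPert e))
      (IRL.Jpol T P ν P0 0 (IRL.piStar T P ν β (rPert ε)) h) ε) ∧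
    -- the derivative of `J*` is the expected return of `h` under `π^ε`
    (∀ ε : ℝ, ∀ μ : Measure (ℕ → S × A),
      IRL.IsTrajLaw T P P0 (IRL.densKernel ν (IRL.piStar T P ν β (rPert ε))) μ →
      IRL.Jpol T P ν P0 0 (IRL.piStar T P ν β (rPert ε)) h
        = ∑ t ∈ Finset.Icc 1 T, ∫ τ, h t (τ t).1 (τ t).2 ∂μ) := by
  subst hrPert
  -- uniform bounds over `t ≤ T`
  set Cr : ℝ := ∑ u ∈ Finset.range (T + 1), |(hr u).2.choose| with hCrdef
  set Ch : ℝ := ∑ u ∈ Finset.range (T + 1), |(hh u).2.choose| with hChdef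
  have hrm : ∀ u, Measurable fun q : S × A => r u q.1 q.2 := fun u => (hr u).1
  have hhm : ∀ u, Measurable fun q : S × A => h u q.1 q.2 := fun u => (hh u).1
  have hCr : ∀ u, u ≤ T → ∀ s a, |r u s a| ≤ Cr := by
    intro u hu s a
    refine le_trans ((hr u).2.choose_spec s a) (le_trans (le_abs_self _) ?_)
    exact Finset.single_le_sum (f := fun u => |(hr u).2.choose|)
      (fun i _ => abs_nonneg _) (Finset.mem_range.2 (by omega))
  have hCh : ∀ u, u ≤ T → ∀ s a, |h u s a| ≤ Ch := by
    intro u hu s a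
    refine le_trans ((hh u).2.choose_spec s a) (le_trans (le_abs_self _) ?_)
    exact Finset.single_le_sum (f := fun u => |(hh u).2.choose|)
      (fun i _ => abs_nonneg _) (Finset.mem_range.2 (by omega))
  refine ⟨?_, ?_, ?_⟩
  · intro ε t ht1 htT
    constructor
    · intro s
      exact IRLAux.vstar_hasDerivAt T P ν β hβ hν r h hrm hhm Cr Ch hCr hCh t ε s
    · intro s a
      exact IRLAux.qstar_hasDerivAt T P ν β hβ hν r h hrm hhm Cr Ch hCr hCh t ε s a
  · intro ε
    exact IRLAux.integral_vstar_hasDerivAt T P ν β hβ hν r h hrm hhm Cr Ch hCr hCh P0 1 ε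
  · intro ε μ hμ
    obtain ⟨hμp, hμint⟩ := hμ
    have hCre : ∀ u, u ≤ T → ∀ (s : S) (a : A),
        |r u s a + ε * h u s a| ≤ Cr + |ε| * Ch := by
      intro u hu s a
      refine le_trans (abs_add_le _ _) (add_le_add (hCr u hu s a) ?_)
      rw [abs_mul]
      exact mul_le_mul_of_nonneg_left (hCh u hu s a) (abs_nonneg ε)
    have hrem : ∀ u, Measurable fun q : S × A => r u q.1 q.2 + ε * h u q.1 q.2 :=
      fun u => (hrm u).add ((hhm u).const_mul ε)
    obtain ⟨hpm, hp0, hpD, hp1⟩ :=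
      IRLAux.piStar_props T P ν β hβ hν _ hrem (Cr + |ε| * Ch) hCre
    have hmb := IRLAux.polExp_g_meas_bdd T P ν
      (IRL.piStar T P ν β (fun u s a => r u s a + ε * h u s a)) h hpm hp0 hpD hp1 hhm Ch hCh
    have hkey : ∀ t ∈ Finset.Icc 1 T,
        ∫ τ, h t (τ t).1 (τ t).2 ∂μ
          = ∫ s, IRL.polExp T P
              (IRL.densKernel ν (IRL.piStar T P ν β (fun u s a => r u s a + ε * h u s a)))
              (IRLAux.gfun h t) 1 s ∂P0 := by
      intro t htmem
      rw [Finset.mem_Icc] at htmem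
      exact hμint (IRLAux.gfun h t) ((hhm t).comp (measurable_pi_apply t))
        ⟨Ch, fun τ => hCh t htmem.2 _ _⟩
    calc IRL.Jpol T P ν P0 0
          (IRL.piStar T P ν β (fun u s a => r u s a + ε * h u s a)) h
        = ∫ s, IRL.Vpol T P ν 0
            (IRL.piStar T P ν β (fun u s a => r u s a + ε * h u s a)) h 1 s ∂P0 := rfl
      _ = ∫ s, ∑ t ∈ Finset.Icc 1 T, IRL.polExp T P
            (IRL.densKernel ν (IRL.piStar T P ν β (fun u s a => r u s a + ε * h u s a)))
            (IRLAux.gfun h t) 1 s ∂P0 := by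
          refine integral_congr_ae (Filter.Eventually.of_forall fun s => ?_)
          exact (IRLAux.sum_polExp T P ν _ h hpm hp0 hpD hp1 hhm Ch hCh 1 s).symm
      _ = ∑ t ∈ Finset.Icc 1 T, ∫ s, IRL.polExp T P
            (IRL.densKernel ν (IRL.piStar T P ν β (fun u s a => r u s a + ε * h u s a)))
            (IRLAux.gfun h t) 1 s ∂P0 := by
          refine integral_finset_sum _ fun t htmem => ?_
          rw [Finset.mem_Icc] at htmem
          exact IRLAux.integrable_of_bdd (hmb 1 t htmem.2).1.aestronglyMeasurable
            (hmb 1 t htmem.2).2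
      _ = ∑ t ∈ Finset.Icc 1 T, ∫ τ, h t (τ t).1 (τ t).2 ∂μ :=
          (Finset.sum_congr rfl fun t htmem => (hkey t htmem).symm)
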